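/- The distance to the nearest perfectly calibrated utility predictor is bounded by 2·sqrt(2·UC(f,u)) + UC(f,u); in particular DCU(f,u) ≤ sqrt(8·UC(f,u)) + UC(f,u). -/

import Mathlib

open MeasureTheory Set

namespace Stmt1Aux

noncomputable def idx (n : ℕ) (x : ℝ) : ℕ := (⌈(x + 1) * n / 2⌉ - 1).toNat

noncomputable def pt (n k : ℕ) : ℝ := -1 + 2 * k / n

lemma pt_zero (n : ℕ) : pt n 0 = -1 := by simp [pt]

lemma pt_last (n : ℕ) (hn : 1 ≤ n) : pt n n = 1 := by
  have : (n : ℝ) ≠ 0 := Nat.cast_ne_zero.mpr (by omega)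
  rw [pt, mul_div_assoc, div_self this]
  norm_num

lemma pt_mono (n : ℕ) {k l : ℕ} (h : k ≤ l) : pt n k ≤ pt n l := by
  have hkl : (k:ℝ) ≤ l := by exact_mod_cast h
  unfold pt
  gcongr

lemma pt_width (n : ℕ) (hn : 1 ≤ n) (k : ℕ) : pt n (k+1) - pt n k = 2 / n := by
  have hnp : (n:ℝ) ≠ 0 := Nat.cast_ne_zero.mpr (by omega)
  unfold pt
  push_cast
  field_simp
  ring

lemma measurable_idx (n : ℕ) : Measurable (idx n) := by
  apply measurable_from_top.comp (f := fun x : ℝ => (⌈(x + 1) * n / 2⌉ - 1))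
  exact (((measurable_id.add_const 1).mul_const _).div_const _).ceil.sub_const 1

lemma pt_idx_le (n : ℕ) (hn : 1 ≤ n) {x : ℝ} (hx : -1 ≤ x) : pt n (idx n x) ≤ x := by
  have hnp : (0:ℝ) < n := by exact_mod_cast Nat.pos_of_ne_zero (by omega)
  have ht0 : 0 ≤ (x + 1) * n / 2 := div_nonneg (mul_nonneg (by linarith) hnp.le) (by norm_num)
  have key : ((idx n x : ℤ) : ℝ) ≤ (x + 1) * n / 2 := by
    unfold idx
    by_cases h : 0 ≤ ⌈(x + 1) * n / 2⌉ - 1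
    · rw [Int.toNat_of_nonneg h]
      push_cast
      have := Int.ceil_lt_add_one ((x + 1) * n / 2)
      linarith
    · rw [Int.toNat_of_nonpos (by omega)]
      simpa using ht0
  push_cast at key
  rw [le_div_iff₀ (by norm_num : (0:ℝ) < 2)] at key
  have h2 : 2 * (idx n x : ℝ) / n ≤ x + 1 := (div_le_iff₀ hnp).mpr (by linarith)
  unfold pt
  linarith

lemma le_pt_idx_succ (n : ℕ) (hn : 1 ≤ n) {x : ℝ} (hx : -1 ≤ x) : x ≤ pt n (idx n x + 1) := by
  have hnp : (0:ℝ) < n := by exact_mod_cast Nat.pos_of_ne_zero (by omega)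
  have key : (x + 1) * n / 2 ≤ (idx n x : ℝ) + 1 := by
    have h1 : (⌈(x + 1) * n / 2⌉ : ℝ) ≤ (idx n x : ℝ) + 1 := by
      unfold idx
      have := Int.self_le_toNat (⌈(x + 1) * n / 2⌉ - 1)
      exact_mod_cast by push_cast at this ⊢; linarith
    linarith [Int.le_ceil ((x + 1) * n / 2)]
  rw [div_le_iff₀ (by norm_num : (0:ℝ) < 2)] at key
  have h2 : x + 1 ≤ 2 * ((idx n x : ℝ) + 1) / n := (le_div_iff₀ hnp).mpr (by linarith)
  unfold pt
  push_cast
  linarith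

lemma idx_lt (n : ℕ) (hn : 1 ≤ n) {x : ℝ} (hx : x ≤ 1) : idx n x < n := by
  have hnp : (0:ℝ) < n := by exact_mod_cast Nat.pos_of_ne_zero (by omega)
  unfold idx
  rw [Int.toNat_lt' (by omega)]
  have h2 : (x + 1) * n / 2 ≤ (n:ℝ) := by
    rw [div_le_iff₀ (by norm_num : (0:ℝ) < 2)]
    nlinarith
  have h3 : ⌈(x + 1) * n / 2⌉ ≤ (n:ℤ) := Int.ceil_le.mpr (by exact_mod_cast h2)
  omega

lemma idx_eq_zero_iff (n : ℕ) (hn : 1 ≤ n) {x : ℝ} (hx : x ∈ Icc (-1:ℝ) 1) :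
    idx n x = 0 ↔ x ∈ Icc (pt n 0) (pt n 1) := by
  have hnp : (0:ℝ) < n := by exact_mod_cast Nat.pos_of_ne_zero (by omega)
  constructor
  · intro h
    refine ⟨by rw [pt_zero]; exact hx.1, ?_⟩
    have := le_pt_idx_succ n hn hx.1
    rwa [h] at this
  · rintro ⟨-, h2⟩
    -- x ≤ pt n 1 = -1 + 2/n ⇒ (x+1)*n/2 ≤ 1 ⇒ ⌈⌉ ≤ 1 ⇒ toNat (⌈⌉-1) = 0
    have hx1 : (x + 1) * n / 2 ≤ 1 := by
      rw [div_le_iff₀ (by norm_num : (0:ℝ) < 2)]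
      unfold pt at h2
      push_cast at h2
      have := (le_div_iff₀ hnp).mp (show x + 1 ≤ 2 / n by linarith)
      linarith
    have := Int.ceil_le.mpr (by exact_mod_cast hx1 : (x + 1) * n / 2 ≤ ((1:ℤ):ℝ))
    unfold idx
    omega

lemma idx_eq_iff (n : ℕ) (hn : 1 ≤ n) {k : ℕ} (hk : 1 ≤ k) {x : ℝ} (hx : x ∈ Icc (-1:ℝ) 1) :
    idx n x = k ↔ x ∈ Ioc (pt n k) (pt n (k+1)) := by
  have hnp : (0:ℝ) < n := by exact_mod_cast Nat.pos_of_ne_zero (by omega)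
  constructor
  · intro h
    refine ⟨?_, by have := le_pt_idx_succ n hn hx.1; rwa [h] at this⟩
    -- idx = k ≥ 1 ⇒ ⌈t⌉ = k+1 ⇒ k < t ⇒ pt k < x
    have hceil : ⌈(x + 1) * n / 2⌉ = (k:ℤ) + 1 := by unfold idx at h; omega
    have hkt : (k:ℝ) < (x + 1) * n / 2 := by
      have := Int.lt_ceil.mp (show (k:ℤ) < ⌈(x + 1) * n / 2⌉ by omega)
      exact_mod_cast this
    rw [lt_div_iff₀ (by norm_num : (0:ℝ) < 2)] at hkt
    have h2 : 2 * (k:ℝ) / n < x + 1 := (div_lt_iff₀ hnp).mpr (by nlinarith)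
    unfold pt
    linarith
  · rintro ⟨h1, h2⟩
    have ha : (k:ℝ) < (x + 1) * n / 2 := by
      rw [lt_div_iff₀ (by norm_num : (0:ℝ) < 2)]
      unfold pt at h1
      have := (div_lt_iff₀ hnp).mp (show 2 * (k:ℝ) / n < x + 1 by linarith)
      linarith
    have hb : (x + 1) * n / 2 ≤ (k:ℝ) + 1 := by
      rw [div_le_iff₀ (by norm_num : (0:ℝ) < 2)]
      unfold pt at h2
      push_cast at h2
      have := (le_div_iff₀ hnp).mp (show x + 1 ≤ 2 * ((k:ℝ)+1) / n by linarith)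
      linarith
    have hceil : ⌈(x + 1) * n / 2⌉ = (k:ℤ) + 1 := by
      rw [Int.ceil_eq_iff]
      constructor
      · push_cast; linarith
      · push_cast; linarith
    unfold idx
    omega


variable {Ω : Type*} [MeasurableSpace Ω]


noncomputable def Bk (v : Ω → ℝ) (n k : ℕ) : Set Ω := {ω | idx n (v ω) = k}

noncomputable def cc (μ : Measure Ω) (uY v : Ω → ℝ) (n k : ℕ) : ℝ :=
  if μ (Bk v n k) = 0 then 0 else (∫ ω in Bk v n k, uY ω ∂μ) / (μ (Bk v n k)).toReal

noncomputable def gfun (μ : Measure Ω) (uY v : Ω → ℝ) (n : ℕ) : Ω → ℝ :=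
  fun ω => cc μ uY v n (idx n (v ω))


lemma key (μ : Measure Ω) [IsProbabilityMeasure μ]
    (uY v : Ω → ℝ) (huY : ∀ ω, uY ω ∈ Icc (-1:ℝ) 1) (hv : ∀ ω, v ω ∈ Icc (-1:ℝ) 1)
    (hmuY : Measurable uY) (hmv : Measurable v) (UC : ℝ)
    (hI0 : ∀ b : ℝ, -1 ≤ b → b ≤ 1 → |∫ ω in v ⁻¹' Icc (-1) b, (uY ω - v ω) ∂μ| ≤ UC)
    (hIoc : ∀ a b : ℝ, -1 ≤ a → b ≤ 1 → |∫ ω in v ⁻¹' Ioc a b, (uY ω - v ω) ∂μ| ≤ UC)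
    (n : ℕ) (hn : 1 ≤ n) :
    ∃ g : Ω → ℝ, Measurable g ∧ (∀ ω, g ω ∈ Icc (-1:ℝ) 1) ∧
      (μ[uY | MeasurableSpace.comap g (by infer_instance)] =ᵐ[μ] g) ∧
      ∫ ω, |g ω - v ω| ∂μ ≤ 2 / n + n * UC := by
  classical
  set g : Ω → ℝ := gfun μ uY v n with hg
  have hBmeas : ∀ k, MeasurableSet (Bk v n k) := fun k =>
    ((measurable_idx n).comp hmv) (measurableSet_singleton k)
  have hgmeas : Measurable g := measurable_from_top.comp ((measurable_idx n).comp hmv)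
  have IuY : Integrable uY μ :=
    ⟨hmuY.aestronglyMeasurable, HasFiniteIntegral.of_bounded (C := 1)
      (ae_of_all _ fun ω => by rw [Real.norm_eq_abs]; exact abs_le.mpr ⟨(huY ω).1, (huY ω).2⟩)⟩
  have Iv : Integrable v μ :=
    ⟨hmv.aestronglyMeasurable, HasFiniteIntegral.of_bounded (C := 1)
      (ae_of_all _ fun ω => by rw [Real.norm_eq_abs]; exact abs_le.mpr ⟨(hv ω).1, (hv ω).2⟩)⟩
  have hccB : ∀ k, |cc μ uY v n k| ≤ 1 := by
    intro k
    unfold cc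
    split_ifs with h
    · norm_num
    · have hpos : 0 < (μ (Bk v n k)).toReal := ENNReal.toReal_pos h (measure_ne_top μ _)
      rw [abs_div, abs_of_nonneg ENNReal.toReal_nonneg, div_le_one hpos]
      calc |∫ ω in Bk v n k, uY ω ∂μ| ≤ ∫ ω in Bk v n k, |uY ω| ∂μ := by
            simpa [Real.norm_eq_abs] using
              norm_integral_le_integral_norm (μ := μ.restrict (Bk v n k)) uY
        _ ≤ ∫ _ω in Bk v n k, (1:ℝ) ∂μ :=
            setIntegral_mono_on IuY.abs.integrableOn (integrable_const 1).integrableOn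
              (hBmeas k) (fun ω _ => abs_le.mpr ⟨(huY ω).1, (huY ω).2⟩)
        _ = (μ (Bk v n k)).toReal := by simp [measureReal_def]
  have hgIcc : ∀ ω, g ω ∈ Icc (-1:ℝ) 1 := fun ω => by
    have := abs_le.mp (hccB (idx n (v ω)))
    exact ⟨this.1, this.2⟩
  have Ig : Integrable g μ :=
    ⟨hgmeas.aestronglyMeasurable, HasFiniteIntegral.of_bounded (C := 1)
      (ae_of_all _ fun ω => by rw [Real.norm_eq_abs]; exact hccB _)⟩
  have hcover : (⋃ k ∈ Finset.range n, Bk v n k) = univ := by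
    ext ω
    simp only [mem_iUnion, Finset.mem_range, mem_univ, iff_true]
    exact ⟨idx n (v ω), idx_lt n hn (hv ω).2, rfl⟩
  have hdisj : (↑(Finset.range n) : Set ℕ).Pairwise (Function.onFun Disjoint (Bk v n)) := by
    intro k _ l _ hkl
    exact Set.disjoint_left.mpr fun ω h1 h2 => hkl ((h1 : _ = k).symm.trans (h2 : _ = l))
  have hsum : ∀ f : Ω → ℝ, Integrable f μ →
      ∫ ω, f ω ∂μ = ∑ k ∈ Finset.range n, ∫ ω in Bk v n k, f ω ∂μ := by
    intro f hf
    rw [← integral_biUnion_finset (Finset.range n) (fun k _ => hBmeas k) hdisj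
      (fun k _ => hf.integrableOn), hcover, setIntegral_univ]
  -- per-bucket conditional-expectation identity
  have hgconst : ∀ k, ∀ ω ∈ Bk v n k, g ω = cc μ uY v n k := by
    intro k ω hω
    have h' : idx n (v ω) = k := hω
    simp only [hg, gfun, h']
  have hBkint : ∀ k, ∫ ω in Bk v n k, g ω ∂μ = ∫ ω in Bk v n k, uY ω ∂μ := by
    intro k
    rw [setIntegral_congr_fun (hBmeas k) (hgconst k), setIntegral_const, smul_eq_mul, measureReal_def]
    by_cases h : μ (Bk v n k) = 0
    · rw [setIntegral_measure_zero _ h]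
      simp [cc, h]
    · have hpos : (μ (Bk v n k)).toReal ≠ 0 :=
        (ENNReal.toReal_pos h (measure_ne_top μ _)).ne'
      rw [cc, if_neg h, mul_div_cancel₀ _ hpos]
  have hcal : μ[uY | MeasurableSpace.comap g (by infer_instance)] =ᵐ[μ] g := by
    have hm : MeasurableSpace.comap g (by infer_instance : MeasurableSpace ℝ) ≤ _ :=
      hgmeas.comap_le
    refine (ae_eq_condExp_of_forall_setIntegral_eq hm IuY
      (fun s _ _ => Ig.integrableOn) ?_ ?_).symm
    · rintro s ⟨t, ht, rfl⟩ -
      have hdecomp : g ⁻¹' t =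
          ⋃ k ∈ (Finset.range n).filter (fun k => cc μ uY v n k ∈ t), Bk v n k := by
        ext ω
        simp only [mem_preimage, mem_iUnion, Finset.mem_filter, Finset.mem_range]
        constructor
        · intro h
          exact ⟨idx n (v ω), ⟨idx_lt n hn (hv ω).2, h⟩, rfl⟩
        · rintro ⟨k, ⟨-, hk⟩, hik⟩
          show g ω ∈ t
          rw [hgconst k ω hik]
          exact hk
      have hsub : ((Finset.range n).filter (fun k => cc μ uY v n k ∈ t) : Set ℕ) ⊆
          (Finset.range n : Set ℕ) := by
        intro k hk
        simp only [Finset.coe_filter, mem_setOf_eq] at hk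
        exact hk.1
      rw [hdecomp,
        integral_biUnion_finset _ (fun k _ => hBmeas k) (hdisj.mono hsub)
          (fun k _ => Ig.integrableOn),
        integral_biUnion_finset _ (fun k _ => hBmeas k) (hdisj.mono hsub)
          (fun k _ => IuY.integrableOn)]
      exact Finset.sum_congr rfl fun k _ => hBkint k
    · exact StronglyMeasurable.aestronglyMeasurable
        (Measurable.stronglyMeasurable (Measurable.of_comap_le le_rfl))
  -- distance bound
  have hvmem : ∀ k, ∀ ω ∈ Bk v n k, v ω ∈ Icc (pt n k) (pt n (k+1)) := by
    intro k ω hω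
    have h1 := pt_idx_le n hn (hv ω).1
    have h2 := le_pt_idx_succ n hn (hv ω).1
    rw [(hω : idx n (v ω) = k)] at h1 h2
    exact ⟨h1, h2⟩
  have hUCk : ∀ k, k < n → |∫ ω in Bk v n k, (uY ω - v ω) ∂μ| ≤ UC := by
    intro k hk
    rcases Nat.eq_zero_or_pos k with rfl | hk1
    · have hB0 : Bk v n 0 = v ⁻¹' Icc (-1) (pt n 1) := by
        ext ω
        rw [show (ω ∈ Bk v n 0) = (idx n (v ω) = 0) from rfl, idx_eq_zero_iff n hn (hv ω),
          pt_zero]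
        rfl
      rw [hB0]
      refine hI0 (pt n 1) ?_ ?_
      · rw [← pt_zero n]; exact pt_mono n (by omega)
      · rw [← pt_last n hn]; exact pt_mono n hk
    · have hBk' : Bk v n k = v ⁻¹' Ioc (pt n k) (pt n (k+1)) := by
        ext ω
        rw [show (ω ∈ Bk v n k) = (idx n (v ω) = k) from rfl, idx_eq_iff n hn hk1 (hv ω)]
        rfl
      rw [hBk']
      refine hIoc (pt n k) (pt n (k+1)) ?_ ?_
      · rw [← pt_zero n]; exact pt_mono n (by omega)
      · rw [← pt_last n hn]; exact pt_mono n (by omega)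
  have hbk : ∀ k, k < n → ∫ ω in Bk v n k, |g ω - v ω| ∂μ ≤
      |∫ ω in Bk v n k, (uY ω - v ω) ∂μ| + (2 / n) * (μ (Bk v n k)).toReal := by
    intro k hk
    by_cases h : μ (Bk v n k) = 0
    · rw [setIntegral_measure_zero _ h, setIntegral_measure_zero _ h]
      have hn0 : (0:ℝ) < n := by exact_mod_cast Nat.pos_of_ne_zero (by omega)
      positivity
    · set m := (μ (Bk v n k)).toReal with hm
      have hmpos : 0 < m := ENNReal.toReal_pos h (measure_ne_top μ _)
      have hn0 : (0:ℝ) < n := by exact_mod_cast Nat.pos_of_ne_zero (by omega)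
      set w := (∫ ω in Bk v n k, v ω ∂μ) / m with hw
      have hwmem : w ∈ Icc (pt n k) (pt n (k+1)) := by
        constructor
        · rw [hw, le_div_iff₀ hmpos]
          have : ∫ _ω in Bk v n k, pt n k ∂μ ≤ ∫ ω in Bk v n k, v ω ∂μ :=
            setIntegral_mono_on (integrable_const _).integrableOn Iv.integrableOn
              (hBmeas k) (fun ω hω => (hvmem k ω hω).1)
          simpa [smul_eq_mul, mul_comm, measureReal_def, hm] using this
        · rw [hw, div_le_iff₀ hmpos]
          have : ∫ ω in Bk v n k, v ω ∂μ ≤ ∫ _ω in Bk v n k, pt n (k+1) ∂μ :=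
            setIntegral_mono_on Iv.integrableOn (integrable_const _).integrableOn
              (hBmeas k) (fun ω hω => (hvmem k ω hω).2)
          simpa [smul_eq_mul, mul_comm, measureReal_def, hm] using this
      have hwidth := pt_width n hn k
      have hpw : ∀ ω ∈ Bk v n k, |g ω - v ω| ≤ |cc μ uY v n k - w| + 2 / n := by
        intro ω hω
        rw [hgconst k ω hω]
        have h2 : |w - v ω| ≤ 2 / n := by
          have hvω := hvmem k ω hω
          rw [abs_le]
          constructor
          · linarith [hwmem.1, hvω.2]
          · linarith [hwmem.2, hvω.1]
        calc |cc μ uY v n k - v ω| ≤ |cc μ uY v n k - w| + |w - v ω| := abs_sub_le _ _ _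
          _ ≤ |cc μ uY v n k - w| + 2 / n := by linarith
      have hccm : cc μ uY v n k * m = ∫ ω in Bk v n k, uY ω ∂μ := by
        rw [cc, if_neg h, div_mul_cancel₀ _ hmpos.ne']
      have hwm : w * m = ∫ ω in Bk v n k, v ω ∂μ := by
        rw [hw, div_mul_cancel₀ _ hmpos.ne']
      calc ∫ ω in Bk v n k, |g ω - v ω| ∂μ
          ≤ ∫ _ω in Bk v n k, (|cc μ uY v n k - w| + 2 / n) ∂μ :=
            setIntegral_mono_on ((Ig.sub Iv).abs.integrableOn)
              (integrable_const _).integrableOn (hBmeas k) hpw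
        _ = (|cc μ uY v n k - w| + 2 / n) * m := by rw [setIntegral_const, smul_eq_mul, mul_comm, measureReal_def]
        _ = |cc μ uY v n k * m - w * m| + (2 / n) * m := by
            rw [add_mul, ← sub_mul, abs_mul, abs_of_nonneg hmpos.le]
        _ = |∫ ω in Bk v n k, (uY ω - v ω) ∂μ| + (2 / n) * m := by
            rw [hccm, hwm, integral_sub IuY.integrableOn Iv.integrableOn]
  have hmass : ∑ k ∈ Finset.range n, (μ (Bk v n k)).toReal = 1 := by
    have := hsum (fun _ => (1:ℝ)) (integrable_const 1)
    simp only [setIntegral_const, smul_eq_mul, mul_one, integral_const, measure_univ,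
      ENNReal.toReal_one, one_mul, Measure.restrict_apply_univ, measureReal_def] at this
    exact this.symm
  have hbound : ∫ ω, |g ω - v ω| ∂μ ≤ 2 / n + n * UC := by
    rw [hsum (fun ω => |g ω - v ω|) (Ig.sub Iv).abs]
    have step : ∀ k ∈ Finset.range n, ∫ ω in Bk v n k, |g ω - v ω| ∂μ ≤
        UC + (2 / n) * (μ (Bk v n k)).toReal := by
      intro k hk
      have hkn := Finset.mem_range.mp hk
      calc ∫ ω in Bk v n k, |g ω - v ω| ∂μ
          ≤ |∫ ω in Bk v n k, (uY ω - v ω) ∂μ| + (2 / n) * (μ (Bk v n k)).toReal := hbk k hkn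
        _ ≤ UC + (2 / n) * (μ (Bk v n k)).toReal := by
            have := hUCk k hkn; linarith
    calc ∑ k ∈ Finset.range n, ∫ ω in Bk v n k, |g ω - v ω| ∂μ
        ≤ ∑ k ∈ Finset.range n, (UC + (2 / n) * (μ (Bk v n k)).toReal) :=
          Finset.sum_le_sum step
      _ = n * UC + (2 / n) * ∑ k ∈ Finset.range n, (μ (Bk v n k)).toReal := by
          rw [Finset.sum_add_distrib, Finset.sum_const, Finset.card_range, ← Finset.mul_sum]
          push_cast
          ring
      _ = 2 / n + n * UC := by rw [hmass]; ring
  exact ⟨g, hgmeas, hgIcc, hcal, hbound⟩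

end Stmt1Aux

open Stmt1Aux in
/-- the distance to the nearest perfectly calibrated utility predictor
satisfies DCU(f,u) ≤ √(8·UC(f,u)) + UC(f,u). -/
theorem stmt_1 {Ω : Type*} [MeasurableSpace Ω] (μ : Measure Ω) [IsProbabilityMeasure μ]
    (uY v : Ω → ℝ)
    (huY : ∀ ω, uY ω ∈ Icc (-1 : ℝ) 1) (hv : ∀ ω, v ω ∈ Icc (-1 : ℝ) 1)
    (hmuY : Measurable uY) (hmv : Measurable v)
    (UC : ℝ)
    (hUC : UC = ⨆ I : {q : ℝ × ℝ // -1 ≤ q.1 ∧ q.1 ≤ q.2 ∧ q.2 ≤ 1},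
      |∫ ω, (uY ω - v ω) * (Icc I.1.1 I.1.2).indicator (fun _ => (1 : ℝ)) (v ω) ∂μ|)
    (DCU : ℝ)
    (hDCU : DCU = sInf {d : ℝ | ∃ g : Ω → ℝ, Measurable g ∧ (∀ ω, g ω ∈ Icc (-1 : ℝ) 1) ∧
      (μ[uY | MeasurableSpace.comap g (by infer_instance)] =ᵐ[μ] g) ∧
      d = ∫ ω, |g ω - v ω| ∂μ}) :
    DCU ≤ Real.sqrt (8 * UC) + UC := by
  have Isub : Integrable (fun ω => uY ω - v ω) μ := by
    refine ⟨(hmuY.sub hmv).aestronglyMeasurable, HasFiniteIntegral.of_bounded (C := 2)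
      (ae_of_all _ fun ω => ?_)⟩
    rw [Real.norm_eq_abs]
    have h1 := huY ω; have h2 := hv ω
    rw [abs_le]
    constructor <;> [linarith [h1.1, h2.2]; linarith [h1.2, h2.1]]
  -- rewrite the UC integrand as a set integral
  have hrw : ∀ a b : ℝ, ∫ ω, (uY ω - v ω) * (Icc a b).indicator (fun _ => (1 : ℝ)) (v ω) ∂μ
      = ∫ ω in v ⁻¹' Icc a b, (uY ω - v ω) ∂μ := by
    intro a b
    rw [← integral_indicator (hmv measurableSet_Icc)]
    congr 1
    ext ω
    by_cases h : v ω ∈ Icc a b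
    · simp [Set.indicator_of_mem h, Set.indicator_of_mem (show ω ∈ v ⁻¹' Icc a b from h)]
    · simp [Set.indicator_of_notMem h, Set.indicator_of_notMem (show ω ∉ v ⁻¹' Icc a b from h)]
  have habs : ∀ s : Set Ω, MeasurableSet s → |∫ ω in s, (uY ω - v ω) ∂μ| ≤ 2 := by
    intro s hs
    calc |∫ ω in s, (uY ω - v ω) ∂μ| ≤ ∫ ω in s, |uY ω - v ω| ∂μ := by
          simpa [Real.norm_eq_abs] using
            norm_integral_le_integral_norm (μ := μ.restrict s) (fun ω => uY ω - v ω)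
      _ ≤ ∫ _ω in s, (2:ℝ) ∂μ := by
          refine setIntegral_mono_on Isub.abs.integrableOn
            (integrable_const _).integrableOn hs (fun ω _ => ?_)
          have h1 := huY ω; have h2 := hv ω
          rw [abs_le]
          constructor <;> [linarith [h1.1, h2.2]; linarith [h1.2, h2.1]]
      _ = (μ s).toReal * 2 := by rw [setIntegral_const, smul_eq_mul, measureReal_def]
      _ ≤ 1 * 2 := by
          have : (μ s).toReal ≤ (μ univ).toReal :=
            ENNReal.toReal_mono (measure_ne_top μ univ) (measure_mono (subset_univ s))
          simp only [measure_univ, ENNReal.toReal_one] at this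
          linarith
      _ = 2 := by norm_num
  have hbdd : BddAbove (Set.range fun I : {q : ℝ × ℝ // -1 ≤ q.1 ∧ q.1 ≤ q.2 ∧ q.2 ≤ 1} =>
      |∫ ω, (uY ω - v ω) * (Icc I.1.1 I.1.2).indicator (fun _ => (1 : ℝ)) (v ω) ∂μ|) := by
    refine ⟨2, ?_⟩
    rintro x ⟨I, rfl⟩
    dsimp only
    rw [hrw I.1.1 I.1.2]
    exact habs _ (hmv measurableSet_Icc)
  have hUC0 : 0 ≤ UC := by
    rw [hUC]
    exact le_trans (abs_nonneg _)
      (le_ciSup hbdd ⟨(-1, 1), by norm_num, by norm_num, by norm_num⟩)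
  have hIcc : ∀ a b : ℝ, -1 ≤ a → a ≤ b → b ≤ 1 →
      |∫ ω in v ⁻¹' Icc a b, (uY ω - v ω) ∂μ| ≤ UC := by
    intro a b h1 h2 h3
    rw [← hrw a b, hUC]
    exact le_ciSup hbdd ⟨(a, b), h1, h2, h3⟩
  have hI0 : ∀ b : ℝ, -1 ≤ b → b ≤ 1 → |∫ ω in v ⁻¹' Icc (-1) b, (uY ω - v ω) ∂μ| ≤ UC :=
    fun b h1 h2 => hIcc (-1) b le_rfl h1 h2
  have hIoc : ∀ a b : ℝ, -1 ≤ a → b ≤ 1 → |∫ ω in v ⁻¹' Ioc a b, (uY ω - v ω) ∂μ| ≤ UC := by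
    intro a b ha hb
    rcases le_or_gt b a with hba | hab
    · rw [Set.Ioc_eq_empty (not_lt.mpr hba)]
      simpa using hUC0
    · set s : ℕ → Set Ω := fun m => v ⁻¹' Icc (a + (b - a) / (m + 1)) b with hs
      have hsm : ∀ m, MeasurableSet (s m) := fun m => hmv measurableSet_Icc
      have hmono : Monotone s := by
        intro m m' hmm
        apply preimage_mono
        apply Icc_subset_Icc_left
        have hc : (m:ℝ) + 1 ≤ (m':ℝ) + 1 := by
          have : (m:ℝ) ≤ m' := by exact_mod_cast hmm
          linarith
        gcongr
      have hunion : (⋃ m, s m) = v ⁻¹' Ioc a b := by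
        ext ω
        simp only [hs, mem_iUnion, mem_preimage, mem_Icc, mem_Ioc]
        constructor
        · rintro ⟨m, h1, h2⟩
          refine ⟨lt_of_lt_of_le ?_ h1, h2⟩
          have : 0 < (b - a) / ((m:ℝ) + 1) := div_pos (by linarith) (by positivity)
          linarith
        · rintro ⟨h1, h2⟩
          obtain ⟨m, hm⟩ := exists_nat_gt ((b - a) / (v ω - a))
          refine ⟨m, ?_, h2⟩
          have hva : 0 < v ω - a := by linarith
          rw [div_lt_iff₀ hva] at hm
          have hle : (b - a) / ((m:ℝ) + 1) ≤ v ω - a := by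
            rw [div_le_iff₀ (by positivity)]
            nlinarith
          linarith
      have htend := tendsto_setIntegral_of_monotone hsm hmono
        (by rw [hunion]; exact Isub.integrableOn)
      rw [hunion] at htend
      refine le_of_tendsto htend.abs (Filter.Eventually.of_forall fun m => ?_)
      have hd0 : 0 < (b - a) / ((m:ℝ) + 1) := div_pos (by linarith) (by positivity)
      have hds : (b - a) / ((m:ℝ) + 1) ≤ b - a := by
        apply div_le_self (by linarith)
        have : (0:ℝ) ≤ m := Nat.cast_nonneg m
        linarith
      exact hIcc _ _ (by linarith) (by linarith) hb
  -- main quantitative step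
  have hstep : ∀ n : ℕ, 1 ≤ n → DCU ≤ 2 / n + n * UC := by
    intro n hn
    obtain ⟨g, h1, h2, h3, h4⟩ := key μ uY v huY hv hmuY hmv UC hI0 hIoc n hn
    have hbddb : BddBelow {d : ℝ | ∃ g : Ω → ℝ, Measurable g ∧ (∀ ω, g ω ∈ Icc (-1 : ℝ) 1) ∧
        (μ[uY | MeasurableSpace.comap g (by infer_instance)] =ᵐ[μ] g) ∧
        d = ∫ ω, |g ω - v ω| ∂μ} := by
      refine ⟨0, ?_⟩
      rintro d ⟨g', -, -, -, rfl⟩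
      exact integral_nonneg fun ω => abs_nonneg _
    rw [hDCU]
    exact le_trans (csInf_le hbddb ⟨g, h1, h2, h3, rfl⟩) h4
  -- final arithmetic
  rcases eq_or_lt_of_le hUC0 with h0 | hpos
  · have hD0 : DCU ≤ 0 := by
      by_contra hcon
      push_neg at hcon
      obtain ⟨n, hn⟩ := exists_nat_gt (2 / DCU)
      have h2D : 0 < 2 / DCU := by positivity
      have hn1 : 1 ≤ n := by
        by_contra hc
        push_neg at hc
        interval_cases n
        simp at hn
        linarith
      have hnpos : (0:ℝ) < n := by
        have : (1:ℝ) ≤ n := by exact_mod_cast hn1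
        linarith
      have := hstep n hn1
      rw [← h0] at this
      have h2n : 2 / (n:ℝ) < DCU := by
        rw [div_lt_iff₀ hnpos]
        rw [div_lt_iff₀ hcon] at hn
        linarith [mul_comm (n:ℝ) DCU]
      simp only [mul_zero, add_zero] at this
      linarith
    rw [← h0]
    simpa using hD0
  · set r := Real.sqrt (2 / UC) with hr
    have hrpos : 0 < r := Real.sqrt_pos.mpr (by positivity)
    set n := ⌈r⌉₊ with hn
    have hn1 : 1 ≤ n := Nat.one_le_ceil_iff.mpr hrpos
    have hnr : r ≤ n := Nat.le_ceil r
    have hnr1 : (n:ℝ) < r + 1 := Nat.ceil_lt_add_one hrpos.le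
    have hnpos : (0:ℝ) < n := lt_of_lt_of_le hrpos hnr
    have hr2 : r ^ 2 = 2 / UC := Real.sq_sqrt (by positivity)
    have hr2' : r ^ 2 * UC = 2 := by
      rw [hr2]
      field_simp
    have h2r : 2 / r = r * UC := by
      rw [div_eq_iff hrpos.ne']
      nlinarith [hr2']
    have h8 : Real.sqrt (8 * UC) = 2 * r * UC := by
      rw [show 8 * UC = (2 * r * UC) ^ 2 by nlinarith [hr2']]
      exact Real.sqrt_sq (by positivity)
    have h1 : 2 / (n:ℝ) ≤ 2 / r := by gcongr
    have h2 : (n:ℝ) * UC ≤ (r + 1) * UC := by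
      apply mul_le_mul_of_nonneg_right hnr1.le hUC0
    calc DCU ≤ 2 / (n:ℝ) + n * UC := hstep n hn1
      _ ≤ 2 / r + (r + 1) * UC := by linarith
      _ = Real.sqrt (8 * UC) + UC := by rw [h8, h2r]; ring
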